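/- Let G ∈ R^{m×n} have full row rank m, and let G = U S Vᵀ be a compact singular value decomposition, with U ∈ R^{m×m} orthogonal, S ∈ R^{m×m} diagonal with positive diagonal entries, and V ∈ R^{n×m} having orthonormal columns (VᵀV = I_m). Then (G Gᵀ)^{-1/2} G = U Vᵀ; that is, one step of ASGO without momentum, gradient accumulation and damping coincides with one step of Muon without momentum. -/

import Mathlib

open Matrix
open scoped Classical

/-- The positive semidefinite square root of a positive semidefinite real matrix
(junk value `0` if the matrix is not positive semidefinite). -/
noncomputable def psdSqrt {k : ℕ} (X : Matrix (Fin k) (Fin k) ℝ) : Matrix (Fin k) (Fin k) ℝ :=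
  if h : X.PosSemidef then
    h.1.eigenvectorUnitary.1 * diagonal (fun i => Real.sqrt (h.1.eigenvalues i)) *
      (star h.1.eigenvectorUnitary : Matrix (Fin k) (Fin k) ℝ)
  else 0

/-- if `G ∈ ℝ^{m×n}` has full row rank `m` and `G = U S Vᵀ` is a compact SVD
(`U` orthogonal `m×m`, `S` diagonal with positive diagonal entries, `V` orthonormal columns
(`VᵀV = 1`), then
`(G Gᵀ)^{-1/2} G = U Vᵀ`: one step of ASGO without momentum, gradient accumulation and
damping coincides with one step of Muon without momentum. -/
theorem stmt4 (m n : ℕ)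
    (G : Matrix (Fin m) (Fin n) ℝ) (hrank : G.rank = m)
    (U S : Matrix (Fin m) (Fin m) ℝ) (V : Matrix (Fin n) (Fin m) ℝ)
    (hU : Uᵀ * U = 1) (hV : Vᵀ * V = 1)
    (d : Fin m → ℝ) (hd : ∀ i, 0 < d i) (hS : S = Matrix.diagonal d)
    (hG : G = U * S * Vᵀ) :
    (psdSqrt (G * Gᵀ))⁻¹ * G = U * Vᵀ := by
  have hUU : U * Uᵀ = 1 := mul_eq_one_comm.mp hU
  set M : Matrix (Fin m) (Fin m) ℝ := U * Matrix.diagonal d * Uᵀ with hM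
  have hMpsd : M.PosSemidef := by
    have hdpsd : (Matrix.diagonal d).PosSemidef :=
      Matrix.posSemidef_diagonal_iff.mpr fun i => (hd i).le
    have := hdpsd.mul_mul_conjTranspose_same U
    simpa [Matrix.conjTranspose_eq_transpose_of_trivial] using this
  have hGGT : G * Gᵀ = M * M := by
    have : (Matrix.diagonal d)ᵀ = Matrix.diagonal d := Matrix.diagonal_transpose d
    rw [hG, hS, hM]
    rw [Matrix.transpose_mul, Matrix.transpose_mul, Matrix.transpose_transpose, this]
    -- G Gᵀ = U D Vᵀ V D Uᵀ
    calc U * Matrix.diagonal d * Vᵀ * (V * (Matrix.diagonal d * Uᵀ))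
        = U * Matrix.diagonal d * (Vᵀ * V) * (Matrix.diagonal d * Uᵀ) := by
          simp only [Matrix.mul_assoc]
      _ = U * Matrix.diagonal d * (Uᵀ * U) * (Matrix.diagonal d * Uᵀ) := by rw [hV, hU]
      _ = U * Matrix.diagonal d * Uᵀ * (U * Matrix.diagonal d * Uᵀ) := by
          simp only [Matrix.mul_assoc]
  have hGGTpsd : (G * Gᵀ).PosSemidef := by
    rw [hGGT, ← pow_two]; exact hMpsd.pow 2
  have hsqrt : psdSqrt (G * Gᵀ) = M := by
    rw [psdSqrt, dif_pos hGGTpsd]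
    have key : cfc Real.sqrt (G * Gᵀ) = M := by
      open scoped MatrixOrder in
      rw [← cfcₙ_eq_cfc, ← CFC.sqrt_eq_real_sqrt _ hGGTpsd.nonneg]
      open scoped MatrixOrder in
      exact CFC.sqrt_unique hGGT.symm hMpsd.nonneg
    rw [Matrix.IsHermitian.cfc_eq hGGTpsd.1, Matrix.IsHermitian.cfc] at key
    simpa [Unitary.conjStarAlgAut_apply, Function.comp_def] using key
  have hMinv : M⁻¹ = U * Matrix.diagonal (fun i => (d i)⁻¹) * Uᵀ := by
    apply Matrix.inv_eq_right_inv
    rw [hM]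
    calc U * Matrix.diagonal d * Uᵀ * (U * Matrix.diagonal (fun i => (d i)⁻¹) * Uᵀ)
        = U * Matrix.diagonal d * (Uᵀ * U) * (Matrix.diagonal (fun i => (d i)⁻¹) * Uᵀ) := by
          simp only [Matrix.mul_assoc]
      _ = U * (Matrix.diagonal d * Matrix.diagonal (fun i => (d i)⁻¹)) * Uᵀ := by
          rw [hU]; simp only [Matrix.mul_one, Matrix.mul_assoc]
      _ = U * Uᵀ := by
          rw [Matrix.diagonal_mul_diagonal]
          have : (fun i => d i * (d i)⁻¹) = fun _ => (1:ℝ) := by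
            funext i; exact mul_inv_cancel₀ (hd i).ne'
          rw [this, Matrix.diagonal_one, Matrix.mul_one]
      _ = 1 := hUU
  rw [hsqrt, hMinv, hG, hS]
  calc U * Matrix.diagonal (fun i => (d i)⁻¹) * Uᵀ * (U * Matrix.diagonal d * Vᵀ)
      = U * Matrix.diagonal (fun i => (d i)⁻¹) * (Uᵀ * U) * (Matrix.diagonal d * Vᵀ) := by
        simp only [Matrix.mul_assoc]
    _ = U * (Matrix.diagonal (fun i => (d i)⁻¹) * Matrix.diagonal d) * Vᵀ := by
        rw [hU]; simp only [Matrix.mul_one, Matrix.mul_assoc]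
    _ = U * Vᵀ := by
        rw [Matrix.diagonal_mul_diagonal]
        have : (fun i => (d i)⁻¹ * d i) = fun _ => (1:ℝ) := by
          funext i; exact inv_mul_cancel₀ (hd i).ne'
        rw [this, Matrix.diagonal_one, Matrix.mul_one]
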